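/- Let a > 0, b ∈ ℝ, and let L be the 4×4 complex matrix with rows (−a−ib, 0, L_13, L_14), (0, −a−ib, L_23, L_24), (conj(L_13), conj(L_14), −a+ib, 0), (conj(L_23), conj(L_24), 0, −a+ib). Then the characteristic polynomial of L, evaluated at λ = −a + iμ with μ ∈ ℝ, equals μ^4 + (c_1 − 2b^2)μ^2 + (b^4 − b^2 c_1 + c_2), where c_1 = L_23·conj(L_14) + |L_24|^2 + |L_13|^2 + L_14·conj(L_23) and c_2 = |L_13|^2|L_24|^2 + |L_23|^2|L_14|^2 − L_14 conj(L_13) L_23 conj(L_24) − L_13 conj(L_14) L_24 conj(L_23). -/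

import Mathlib

open Complex

set_option maxHeartbeats 1000000

theorem aux_det_fin_four {R : Type*} [CommRing R] (M : Matrix (Fin 4) (Fin 4) R) :
    M.det =
      M 0 0 * M 1 1 * M 2 2 * M 3 3 - M 0 0 * M 1 1 * M 2 3 * M 3 2 -
        M 0 0 * M 1 2 * M 2 1 * M 3 3 + M 0 0 * M 1 2 * M 2 3 * M 3 1 +
        M 0 0 * M 1 3 * M 2 1 * M 3 2 - M 0 0 * M 1 3 * M 2 2 * M 3 1 -
        M 0 1 * M 1 0 * M 2 2 * M 3 3 + M 0 1 * M 1 0 * M 2 3 * M 3 2 +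
        M 0 1 * M 1 2 * M 2 0 * M 3 3 - M 0 1 * M 1 2 * M 2 3 * M 3 0 -
        M 0 1 * M 1 3 * M 2 0 * M 3 2 + M 0 1 * M 1 3 * M 2 2 * M 3 0 +
        M 0 2 * M 1 0 * M 2 1 * M 3 3 - M 0 2 * M 1 0 * M 2 3 * M 3 1 -
        M 0 2 * M 1 1 * M 2 0 * M 3 3 + M 0 2 * M 1 1 * M 2 3 * M 3 0 +
        M 0 2 * M 1 3 * M 2 0 * M 3 1 - M 0 2 * M 1 3 * M 2 1 * M 3 0 -
        M 0 3 * M 1 0 * M 2 1 * M 3 2 + M 0 3 * M 1 0 * M 2 2 * M 3 1 +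
        M 0 3 * M 1 1 * M 2 0 * M 3 2 - M 0 3 * M 1 1 * M 2 2 * M 3 0 -
        M 0 3 * M 1 2 * M 2 0 * M 3 1 + M 0 3 * M 1 2 * M 2 1 * M 3 0 := by
  simp [Matrix.det_succ_row_zero, Fin.sum_univ_succ, Matrix.submatrix_apply,
    Finset.sum_neg_distrib]
  simp only [show Fin.succAbove (2 : Fin 4) (2 : Fin 3) = 3 from rfl,
    show Fin.succAbove (3 : Fin 4) (2 : Fin 3) = 2 from rfl,
    show Fin.succAbove (1 : Fin 4) (2 : Fin 3) = 3 from rfl]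
  ring

theorem stmt_17 (a b : ℝ) (ha : 0 < a) (L₁₃ L₁₄ L₂₃ L₂₄ : ℂ)
    (L : Matrix (Fin 4) (Fin 4) ℂ)
    (hL : L = !![(-a : ℂ) - I * b, 0, L₁₃, L₁₄;
                 0, (-a : ℂ) - I * b, L₂₃, L₂₄;
                 starRingEnd ℂ L₁₃, starRingEnd ℂ L₁₄, (-a : ℂ) + I * b, 0;
                 starRingEnd ℂ L₂₃, starRingEnd ℂ L₂₄, 0, (-a : ℂ) + I * b])
    (c₁ c₂ : ℂ)
    (hc₁ : c₁ = L₂₃ * starRingEnd ℂ L₁₄ + (‖L₂₄‖ : ℂ) ^ 2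
      + (‖L₁₃‖ : ℂ) ^ 2 + L₁₄ * starRingEnd ℂ L₂₃)
    (hc₂ : c₂ = (‖L₁₃‖ : ℂ) ^ 2 * (‖L₂₄‖ : ℂ) ^ 2
      + (‖L₂₃‖ : ℂ) ^ 2 * (‖L₁₄‖ : ℂ) ^ 2
      - L₁₄ * starRingEnd ℂ L₁₃ * L₂₃ * starRingEnd ℂ L₂₄
      - L₁₃ * starRingEnd ℂ L₁₄ * L₂₄ * starRingEnd ℂ L₂₃) :
    ∀ μ : ℝ,
      (Matrix.charpoly L).eval ((-a : ℂ) + I * μ)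
        = (μ : ℂ) ^ 4 + (c₁ - 2 * (b : ℂ) ^ 2) * (μ : ℂ) ^ 2
          + ((b : ℂ) ^ 4 - (b : ℂ) ^ 2 * c₁ + c₂) := by
  intro μ
  have habs : ∀ z : ℂ, ((‖z‖ : ℂ)) ^ 2 = z * starRingEnd ℂ z := by
    intro z
    rw [← Complex.ofReal_pow, Complex.sq_norm, Complex.mul_conj]
  subst hL hc₁ hc₂
  set x : ℂ := (-a : ℂ) + I * μ with hx
  rw [Matrix.charpoly, ← Polynomial.coe_evalRingHom, RingHom.map_det,
    RingHom.mapMatrix_apply, aux_det_fin_four]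
  simp only [Matrix.map_apply, Matrix.charmatrix_apply, Matrix.diagonal_apply,
    Matrix.sub_apply, Matrix.cons_val', Matrix.cons_val_zero, Matrix.cons_val_one,
    Matrix.head_cons, Matrix.empty_val', Matrix.cons_val_fin_one, Matrix.cons_val_two,
    Matrix.tail_cons, Matrix.cons_val_three, Matrix.cons_val, Matrix.of_apply, Matrix.head_fin_const, Fin.isValue,
    Polynomial.coe_evalRingHom, Polynomial.eval_sub, Polynomial.eval_X, Polynomial.eval_C, Fin.reduceEq, reduceIte, Polynomial.eval_zero]
  norm_num [habs, hx]
  ring_nf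
  simp only [Complex.I_sq, Complex.I_pow_four]
  ring
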